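/- Let X be a compact metric space, G ≤ Homeo(X) closed in C(X,X), and H ⊴ G closed in G. Then the quotient group G/H is completely metrizable, with complete metric D'(g₁H, g₂H) = D(g₁H, g₂H) + D(g₁⁻¹H, g₂⁻¹H), where D is the Hausdorff metric induced by the uniform metric. -/

import Mathlib

open EMetric in
/-- Let `X` be a compact metric space, `G` a group of homeomorphisms
of `X` closed in `C(X,X)`, and `H ⊴ G` closed in `G`.  Then the quotient group `G/H`
is completely metrizable with complete metric
`D'(g₁H, g₂H) = D(g₁H, g₂H) + D(g₁⁻¹H, g₂⁻¹H)` where `D` is the Hausdorff metric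
induced by the uniform metric: `D'` vanishes exactly on equal cosets, is symmetric,
satisfies the triangle inequality, and every `D'`-Cauchy sequence of cosets of
elements of `G` converges to the coset of an element of `G`. -/
theorem stmt13 {X : Type*} [MetricSpace X] [CompactSpace X]
    (G H : Set (X ≃ₜ X))
    (hG1 : Homeomorph.refl X ∈ G) (hG2 : ∀ f ∈ G, ∀ g ∈ G, f.trans g ∈ G)
    (hG3 : ∀ f ∈ G, f.symm ∈ G) (hHG : H ⊆ G)
    (hH1 : Homeomorph.refl X ∈ H) (hH2 : ∀ f ∈ H, ∀ g ∈ H, f.trans g ∈ H)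
    (hH3 : ∀ f ∈ H, f.symm ∈ H)
    (hnorm : ∀ g ∈ G, ∀ h ∈ H, (g.symm.trans h).trans g ∈ H)
    (hGclosed : closure {q : C(X, X) | ∃ g ∈ G, q = (g : C(X, X))} =
      {q : C(X, X) | ∃ g ∈ G, q = (g : C(X, X))})
    (hHclosed : closure {q : C(X, X) | ∃ h ∈ H, q = (h : C(X, X))} ∩
        {q : C(X, X) | ∃ g ∈ G, q = (g : C(X, X))} ⊆
      {q : C(X, X) | ∃ h ∈ H, q = (h : C(X, X))}) :
    let coset : (X ≃ₜ X) → Set C(X, X) :=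
      fun g => {q : C(X, X) | ∃ h ∈ H, q = ((g : C(X, X))).comp (h : C(X, X))}
    let D' : (X ≃ₜ X) → (X ≃ₜ X) → ENNReal := fun g₁ g₂ =>
      hausdorffEdist (coset g₁) (coset g₂) +
        hausdorffEdist (coset g₁.symm) (coset g₂.symm)
    -- `D'` is a metric on the set of cosets `gH`, `g ∈ G`:
    (∀ g₁ ∈ G, ∀ g₂ ∈ G, (D' g₁ g₂ = 0 ↔ ∃ h ∈ H, g₂ = h.trans g₁)) ∧
    (∀ g₁ ∈ G, ∀ g₂ ∈ G, D' g₁ g₂ = D' g₂ g₁) ∧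
    (∀ g₁ ∈ G, ∀ g₂ ∈ G, ∀ g₃ ∈ G, D' g₁ g₃ ≤ D' g₁ g₂ + D' g₂ g₃) ∧
    (∀ g₁ ∈ G, ∀ g₂ ∈ G, D' g₁ g₂ ≠ ⊤) ∧
    -- `D'` is complete on `G/H`
    (∀ F : ℕ → (X ≃ₜ X), (∀ n, F n ∈ G) →
      (∀ ε : ℝ, 0 < ε → ∃ N : ℕ, ∀ a ≥ N, ∀ b ≥ N,
        D' (F a) (F b) < ENNReal.ofReal ε) →
      ∃ g ∈ G, Filter.Tendsto (fun n => D' (F n) g) Filter.atTop (nhds 0)) := by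
  intro coset D'
  -- the coe of a composed homeomorphism
  have coeTrans : ∀ a b : X ≃ₜ X, ((a.trans b : X ≃ₜ X) : C(X, X))
      = ((b : C(X, X))).comp (a : C(X, X)) := by
    intro a b; ext x; rfl
  have memCoset : ∀ g : X ≃ₜ X, (g : C(X, X)) ∈ coset g := by
    intro g
    exact ⟨Homeomorph.refl X, hH1, by ext x; rfl⟩
  -- right-invariance: Hausdorff distance of cosets is at most distance of representatives
  have lemA : ∀ a b : X ≃ₜ X,
      EMetric.hausdorffEdist (coset a) (coset b) ≤ edist (a : C(X, X)) (b : C(X, X)) := by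
    intro a b
    have key : ∀ (u v : X ≃ₜ X) (h : X ≃ₜ X),
        edist (((u : C(X, X))).comp (h : C(X, X))) (((v : C(X, X))).comp (h : C(X, X)))
          ≤ edist (u : C(X, X)) (v : C(X, X)) := by
      intro u v h
      rw [edist_dist, edist_dist]
      apply ENNReal.ofReal_le_ofReal
      have h0 : (0 : ℝ) ≤ dist (u : C(X, X)) (v : C(X, X)) := dist_nonneg
      exact (ContinuousMap.dist_le h0).mpr fun x =>
        ContinuousMap.dist_apply_le_dist (f := (u : C(X, X))) (g := (v : C(X, X))) (h x)
    apply EMetric.hausdorffEdist_le_of_mem_edist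
    · rintro q ⟨h, hh, rfl⟩
      exact ⟨((b : C(X, X))).comp (h : C(X, X)), ⟨h, hh, rfl⟩, key a b h⟩
    · rintro q ⟨h, hh, rfl⟩
      exact ⟨((a : C(X, X))).comp (h : C(X, X)), ⟨h, hh, rfl⟩,
        (key b a h).trans (edist_comm (a : C(X, X)) (b : C(X, X)) ▸ le_refl _)⟩
  -- multiplying the representative by an element of H does not change the coset
  have lemB : ∀ (g : X ≃ₜ X), ∀ h ∈ H, coset (h.trans g) = coset g := by
    intro g h hh
    ext q
    constructor
    · rintro ⟨h', hh', rfl⟩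
      exact ⟨h'.trans h, hH2 h' hh' h hh, by ext x; rfl⟩
    · rintro ⟨h', hh', rfl⟩
      refine ⟨h'.trans h.symm, hH2 h' hh' h.symm (hH3 h hh), ?_⟩
      ext x
      simp [Homeomorph.apply_symm_apply]
  -- and, thanks to normality, does not change the coset of inverses
  have lemBsymm : ∀ g ∈ G, ∀ h ∈ H, coset ((h.trans g).symm) = coset g.symm := by
    intro g hg h hh
    have hk : (g.symm.trans h.symm).trans g ∈ H := hnorm g hg h.symm (hH3 h hh)
    have heq : (h.trans g).symm = ((g.symm.trans h.symm).trans g).trans g.symm := by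
      ext x
      simp
    rw [heq, lemB _ _ hk]
  -- Hausdorff distance zero forces equal cosets
  have lemC : ∀ g₁ ∈ G, ∀ g₂ ∈ G,
      EMetric.hausdorffEdist (coset g₁) (coset g₂) = 0 → ∃ h ∈ H, g₂ = h.trans g₁ := by
    intro g₁ hg₁ g₂ hg₂ h0
    have hcl : (g₂ : C(X, X)) ∈ closure (coset g₁) := by
      rw [EMetric.hausdorffEdist_zero_iff_closure_eq_closure.mp h0]
      exact subset_closure (memCoset g₂)
    have hcont : Continuous fun q : C(X, X) => ((g₁.symm : C(X, X))).comp q :=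
      ContinuousMap.continuous_postcomp _
    have himg : ((g₁.symm : C(X, X))).comp (g₂ : C(X, X)) ∈
        closure {q : C(X, X) | ∃ h ∈ H, q = (h : C(X, X))} := by
      have h2 : ((g₁.symm : C(X, X))).comp (g₂ : C(X, X)) ∈
          closure ((fun q : C(X, X) => ((g₁.symm : C(X, X))).comp q) '' coset g₁) :=
        image_closure_subset_closure_image hcont ⟨(g₂ : C(X, X)), hcl, rfl⟩
      refine closure_mono ?_ h2
      rintro q ⟨q', ⟨h, hh, rfl⟩, rfl⟩
      exact ⟨h, hh, by ext x; simp⟩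
    have hinG : ((g₁.symm : C(X, X))).comp (g₂ : C(X, X)) ∈
        {q : C(X, X) | ∃ g ∈ G, q = (g : C(X, X))} :=
      ⟨g₂.trans g₁.symm, hG2 g₂ hg₂ g₁.symm (hG3 g₁ hg₁), by ext x; rfl⟩
    obtain ⟨h, hh, hqh⟩ := hHclosed ⟨himg, hinG⟩
    refine ⟨h, hh, ?_⟩
    have hfun : ∀ x, g₁.symm (g₂ x) = h x := by
      intro x
      exact DFunLike.congr_fun hqh x
    ext x
    have := hfun x
    calc g₂ x = g₁ (g₁.symm (g₂ x)) := (g₁.apply_symm_apply (g₂ x)).symm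
      _ = g₁ (h x) := by rw [this]
      _ = (h.trans g₁) x := rfl
  -- general triangle inequality for D'
  have triD : ∀ a b c : X ≃ₜ X, D' a c ≤ D' a b + D' b c := by
    intro a b c
    show EMetric.hausdorffEdist (coset a) (coset c) +
        EMetric.hausdorffEdist (coset a.symm) (coset c.symm) ≤ _
    calc EMetric.hausdorffEdist (coset a) (coset c) +
        EMetric.hausdorffEdist (coset a.symm) (coset c.symm)
        ≤ (EMetric.hausdorffEdist (coset a) (coset b) +
            EMetric.hausdorffEdist (coset b) (coset c)) +
          (EMetric.hausdorffEdist (coset a.symm) (coset b.symm) +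
            EMetric.hausdorffEdist (coset b.symm) (coset c.symm)) :=
          add_le_add EMetric.hausdorffEdist_triangle EMetric.hausdorffEdist_triangle
      _ = D' a b + D' b c := by
          show _ = (EMetric.hausdorffEdist (coset a) (coset b) +
            EMetric.hausdorffEdist (coset a.symm) (coset b.symm)) +
            (EMetric.hausdorffEdist (coset b) (coset c) +
            EMetric.hausdorffEdist (coset b.symm) (coset c.symm))
          rw [add_add_add_comm]
  -- D' bounded by distances of representatives
  have D'le : ∀ a b : X ≃ₜ X, D' a b ≤
      edist (a : C(X, X)) (b : C(X, X)) + edist (a.symm : C(X, X)) (b.symm : C(X, X)) :=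
    fun a b => add_le_add (lemA a b) (lemA a.symm b.symm)
  -- D' is unchanged when a representative is replaced inside its coset
  have D'rep : ∀ g ∈ G, ∀ h ∈ H, ∀ b : X ≃ₜ X, D' g b = D' (h.trans g) b := by
    intro g hg h hh b
    show EMetric.hausdorffEdist (coset g) (coset b) +
        EMetric.hausdorffEdist (coset g.symm) (coset b.symm) = _
    rw [← lemB g h hh, ← lemBsymm g hg h hh]
  refine ⟨?_, ?_, ?_, ?_, ?_⟩
  · -- vanishing
    intro g₁ hg₁ g₂ hg₂
    constructor
    · intro h0
      have h0' : EMetric.hausdorffEdist (coset g₁) (coset g₂) = 0 := by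
        have : EMetric.hausdorffEdist (coset g₁) (coset g₂) +
            EMetric.hausdorffEdist (coset g₁.symm) (coset g₂.symm) = 0 := h0
        exact (add_eq_zero.mp this).1
      exact lemC g₁ hg₁ g₂ hg₂ h0'
    · rintro ⟨h, hh, rfl⟩
      show EMetric.hausdorffEdist (coset g₁) (coset (h.trans g₁)) +
        EMetric.hausdorffEdist (coset g₁.symm) (coset (h.trans g₁).symm) = 0
      rw [lemB g₁ h hh, lemBsymm g₁ hg₁ h hh]
      exact (congrArg₂ (· + ·) EMetric.hausdorffEdist_self EMetric.hausdorffEdist_self).trans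
        (add_zero 0)
  · -- symmetry
    intro g₁ _ g₂ _
    show EMetric.hausdorffEdist (coset g₁) (coset g₂) +
        EMetric.hausdorffEdist (coset g₁.symm) (coset g₂.symm) =
      EMetric.hausdorffEdist (coset g₂) (coset g₁) +
        EMetric.hausdorffEdist (coset g₂.symm) (coset g₁.symm)
    exact congrArg₂ (· + ·) EMetric.hausdorffEdist_comm EMetric.hausdorffEdist_comm
  · -- triangle inequality
    intro g₁ _ g₂ _ g₃ _
    exact triD g₁ g₂ g₃
  · -- finiteness
    intro g₁ _ g₂ _
    have := (D'le g₁ g₂).trans_lt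
      (ENNReal.add_lt_top.mpr ⟨edist_lt_top _ _, edist_lt_top _ _⟩)
    exact this.ne
  · -- completeness
    intro F hFG hCau
    -- a rapidly Cauchy subsequence
    have hpow : ∀ k : ℕ, ∃ N, ∀ a ≥ N, ∀ b ≥ N,
        D' (F a) (F b) < ENNReal.ofReal ((1 / 2 : ℝ) ^ k) :=
      fun k => hCau _ (by positivity)
    choose N hN using hpow
    let φ : ℕ → ℕ := fun k => Nat.rec (N 0) (fun k p => max (N (k + 1)) (p + 1)) k
    have hφN : ∀ k, N k ≤ φ k := by
      intro k
      cases k with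
      | zero => exact le_refl _
      | succ k => exact le_max_left _ _
    have hφm : ∀ k, φ k + 1 ≤ φ (k + 1) := fun k => le_max_right _ _
    have hφk : ∀ k, k ≤ φ k := by
      intro k
      induction k with
      | zero => exact Nat.zero_le _
      | succ k ih => exact le_trans (Nat.succ_le_succ ih) (hφm k)
    have hφs : ∀ k, D' (F (φ k)) (F (φ (k + 1))) < ENNReal.ofReal ((1 / 2 : ℝ) ^ k) := by
      intro k
      exact hN k _ (hφN k) _ (le_trans (le_trans (hφN k) (Nat.le_succ _)) (hφm k))
    -- inductively choose representatives which form a Cauchy sequence in C(X,X)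
    have step : ∀ (k : ℕ) (p : X ≃ₜ X), (∃ h ∈ H, p = h.trans (F (φ k))) →
        ∃ p' : X ≃ₜ X, (∃ h ∈ H, p' = h.trans (F (φ (k + 1)))) ∧
          edist (p : C(X, X)) (p' : C(X, X)) < ENNReal.ofReal ((1 / 2 : ℝ) ^ k) := by
      rintro k p ⟨h, hh, rfl⟩
      have hmem : ((h.trans (F (φ k)) : X ≃ₜ X) : C(X, X)) ∈ coset (F (φ k)) :=
        ⟨h, hh, by ext x; rfl⟩
      have hlt : EMetric.hausdorffEdist (coset (F (φ k))) (coset (F (φ (k + 1)))) <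
          ENNReal.ofReal ((1 / 2 : ℝ) ^ k) :=
        lt_of_le_of_lt le_self_add (hφs k)
      obtain ⟨y, ⟨h', hh', rfl⟩, hy⟩ := EMetric.exists_edist_lt_of_hausdorffEdist_lt hmem hlt
      refine ⟨h'.trans (F (φ (k + 1))), ⟨h', hh', rfl⟩, ?_⟩
      have : ((h'.trans (F (φ (k + 1))) : X ≃ₜ X) : C(X, X)) =
          ((F (φ (k + 1)) : C(X, X))).comp (h' : C(X, X)) := by ext x; rfl
      rw [this]
      exact hy
    choose! nxt hnxt1 hnxt2 using step
    obtain ⟨u, hu0, husucc⟩ : ∃ u : ℕ → X ≃ₜ X,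
        u 0 = (Homeomorph.refl X).trans (F (φ 0)) ∧ ∀ k, u (k + 1) = nxt k (u k) :=
      ⟨fun k => Nat.rec ((Homeomorph.refl X).trans (F (φ 0))) nxt k, rfl, fun _ => rfl⟩
    have huinv : ∀ k, ∃ h ∈ H, u k = h.trans (F (φ k)) := by
      intro k
      induction k with
      | zero => exact ⟨Homeomorph.refl X, hH1, hu0⟩
      | succ k ih =>
        rw [husucc k]
        exact hnxt1 k (u k) ih
    have huclose : ∀ k, edist ((u k : C(X, X))) ((u (k + 1) : C(X, X))) <
        ENNReal.ofReal ((1 / 2 : ℝ) ^ k) := by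
      intro k
      rw [husucc k]
      exact hnxt2 k (u k) (huinv k)
    have huG : ∀ k, u k ∈ G := by
      intro k
      obtain ⟨h, hh, hu⟩ := huinv k
      rw [hu]
      exact hG2 h (hHG hh) _ (hFG _)
    -- the sequence of representatives converges
    have hcs : CauchySeq fun k => (u k : C(X, X)) := by
      apply cauchySeq_of_edist_le_geometric (ENNReal.ofReal (1 / 2)) 1
        (ENNReal.ofReal_lt_one.mpr (by norm_num)) ENNReal.one_ne_top
      intro n
      rw [one_mul, ← ENNReal.ofReal_pow (by norm_num : (0 : ℝ) ≤ 1 / 2)]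
      exact (huclose n).le
    obtain ⟨q, hq⟩ := cauchySeq_tendsto_of_complete hcs
    -- the limit is (the coe of) an element of G
    have hqG : q ∈ {q : C(X, X) | ∃ g ∈ G, q = (g : C(X, X))} := by
      rw [← hGclosed]
      exact mem_closure_of_tendsto hq (Filter.Eventually.of_forall fun k => ⟨u k, huG k, rfl⟩)
    obtain ⟨g, hgG, rfl⟩ := hqG
    refine ⟨g, hgG, ?_⟩
    -- inverses also converge
    have hqsymm : Filter.Tendsto (fun k => ((u k).symm : C(X, X)))
        Filter.atTop (nhds (g.symm : C(X, X))) := by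
      rw [Metric.tendsto_atTop]
      intro ε hε
      have hug : UniformContinuous (g.symm : X → X) :=
        CompactSpace.uniformContinuous_of_continuous g.symm.continuous
      obtain ⟨δ, hδ, hδ'⟩ := Metric.uniformContinuous_iff.mp hug (ε / 2) (by positivity)
      obtain ⟨K, hK⟩ := (Metric.tendsto_atTop.mp hq) δ hδ
      refine ⟨K, fun k hk => ?_⟩
      have hdist : dist ((u k).symm : C(X, X)) (g.symm : C(X, X)) ≤ ε / 2 := by
        rw [ContinuousMap.dist_le (by positivity)]
        intro x
        have h1 : dist (g ((u k).symm x)) x < δ := by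
          have h2 : dist ((u k : C(X, X)) ((u k).symm x)) ((g : C(X, X)) ((u k).symm x)) ≤
              dist ((u k : C(X, X))) (g : C(X, X)) :=
            ContinuousMap.dist_apply_le_dist _
          have h3 : (u k : C(X, X)) ((u k).symm x) = x := (u k).apply_symm_apply x
          rw [h3] at h2
          calc dist (g ((u k).symm x)) x = dist x (g ((u k).symm x)) := dist_comm _ _
            _ ≤ dist ((u k : C(X, X))) (g : C(X, X)) := h2
            _ < δ := hK k hk
        have := hδ' h1
        rw [g.symm_apply_apply] at this
        exact this.le
      calc dist ((u k).symm : C(X, X)) (g.symm : C(X, X)) ≤ ε / 2 := hdist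
        _ < ε := by linarith
    -- conclude: D' (F n) g → 0
    rw [ENNReal.tendsto_atTop_zero]
    intro ε hε
    set ε₀ := min ε 1 with hε₀def
    have hε₀top : ε₀ ≠ ⊤ := ((min_le_right _ _).trans_lt ENNReal.one_lt_top).ne
    have hε₀pos : 0 < ε₀ := lt_min hε zero_lt_one
    set δ := ε₀.toReal with hδdef
    have hδpos : 0 < δ := ENNReal.toReal_pos hε₀pos.ne' hε₀top
    have hofδ : ENNReal.ofReal δ ≤ ε := by
      rw [hδdef, ENNReal.ofReal_toReal hε₀top]
      exact min_le_left _ _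
    obtain ⟨N₁, hN₁⟩ := hCau (δ / 4) (by positivity)
    have t1 : ∀ᶠ k in Filter.atTop,
        edist ((u k : C(X, X))) (g : C(X, X)) ≤ ENNReal.ofReal (δ / 4) := by
      have := (Metric.tendsto_atTop.mp hq) (δ / 4) (by positivity)
      obtain ⟨K, hK⟩ := this
      exact Filter.eventually_atTop.mpr ⟨K, fun k hk => by
        rw [edist_dist]; exact ENNReal.ofReal_le_ofReal (hK k hk).le⟩
    have t2 : ∀ᶠ k in Filter.atTop,
        edist (((u k).symm : C(X, X))) (g.symm : C(X, X)) ≤ ENNReal.ofReal (δ / 4) := by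
      have := (Metric.tendsto_atTop.mp hqsymm) (δ / 4) (by positivity)
      obtain ⟨K, hK⟩ := this
      exact Filter.eventually_atTop.mpr ⟨K, fun k hk => by
        rw [edist_dist]; exact ENNReal.ofReal_le_ofReal (hK k hk).le⟩
    have t3 : ∀ᶠ k in Filter.atTop, N₁ ≤ φ k :=
      Filter.eventually_atTop.mpr ⟨N₁, fun k hk => hk.trans (hφk k)⟩
    obtain ⟨k, ⟨h1, h2⟩, h3⟩ := ((t1.and t2).and t3).exists
    refine ⟨N₁, fun n hn => ?_⟩
    obtain ⟨h, hh, hu⟩ := huinv k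
    have hDrep : D' (F (φ k)) g = D' (u k) g := by
      rw [hu]
      exact D'rep (F (φ k)) (hFG _) h hh g
    have hb1 : D' (F n) (F (φ k)) ≤ ENNReal.ofReal (δ / 4) := (hN₁ n hn (φ k) h3).le
    have hb2 : D' (u k) g ≤ ENNReal.ofReal (δ / 4) + ENNReal.ofReal (δ / 4) :=
      (D'le (u k) g).trans (add_le_add h1 h2)
    calc D' (F n) g ≤ D' (F n) (F (φ k)) + D' (F (φ k)) g := triD _ _ _
      _ = D' (F n) (F (φ k)) + D' (u k) g := by rw [hDrep]
      _ ≤ ENNReal.ofReal (δ / 4) + (ENNReal.ofReal (δ / 4) + ENNReal.ofReal (δ / 4)) :=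
          add_le_add hb1 hb2
      _ = ENNReal.ofReal (δ / 4 + (δ / 4 + δ / 4)) := by
          rw [← ENNReal.ofReal_add (by positivity) (by positivity),
            ← ENNReal.ofReal_add (by positivity) (by positivity)]
      _ ≤ ENNReal.ofReal δ := ENNReal.ofReal_le_ofReal (by linarith)
      _ ≤ ε := hofδ
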